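/- Let C be the 8×8 Hermitian Choi operator of a map satisfying phase covariance, flip covariance, and permutation invariance, parametrized by c₁, c₄ ∈ ℝ, c₂, c₃, c₅, c₆ ∈ ℂ as in the general block form of the paper, and additionally satisfying the classical-consistency constraints c₃ = 1 − c₂, c₅ = c₄ − 1/2, c₆ = 2 − c₁ − 4c₄. Then the partial trace of C over the first two qubit factors equals the identity, i.e., the corresponding map is trace-preserving everywhere. -/
import Mathlib


open Matrix Complex

noncomputable section

/-- The general Choi operator (Eq. (12)) of a map satisfying phase covariance,
flip covariance and permutation invariance. -/
noncomputable def Cgen (c1 c2 c3 c4 c5 c6 : ℂ) : Matrix (Fin 8) (Fin 8) ℂ :=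
  !![c1, 0, 0, c2, 0, c2, 0, 0;
     0, c6, 0, 0, 0, 0, 0, 0;
     0, 0, c4+c5, 0, c4-c5, 0, 0, c3;
     c3, 0, 0, c4+c5, 0, c4-c5, 0, 0;
     0, 0, c4-c5, 0, c4+c5, 0, 0, c3;
     c3, 0, 0, c4-c5, 0, c4+c5, 0, 0;
     0, 0, 0, 0, 0, 0, c6, 0;
     0, 0, c2, 0, c2, 0, 0, c1]

def idx (m : Fin 4) (k : Fin 2) : Fin 8 :=
  ⟨2 * m.val + k.val, by have := m.isLt; have := k.isLt; omega⟩

noncomputable def ptrace12 (C : Matrix (Fin 8) (Fin 8) ℂ) : Matrix (Fin 2) (Fin 2) ℂ :=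
  Matrix.of fun k l => ∑ m : Fin 4, C (idx m k) (idx m l)

/-- Under the classical-consistency constraints `c₃ = 1 − c₂`, `c₅ = c₄ − 1/2`,
`c₆ = 2 − c₁ − 4c₄` (with `c₁, c₄ ∈ ℝ`), the map with Choi operator `Cgen` is
trace-preserving everywhere: `Tr₁₂ C = 1₂`. -/
theorem ptrace12_Cgen (c1 c4 : ℝ) (c2 c3 c5 c6 : ℂ)
    (h3 : c3 = 1 - c2) (h5 : c5 = (c4 : ℂ) - 1/2)
    (h6 : c6 = 2 - (c1 : ℂ) - 4 * (c4 : ℂ)) :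
    ptrace12 (Cgen (c1 : ℂ) c2 c3 (c4 : ℂ) c5 c6) = 1 := by
  have E000 : ∀ (a b c d e f : ℂ), Cgen a b c d e f (idx 0 0) (idx 0 0) = a := fun _ _ _ _ _ _ => rfl
  have E001 : ∀ (a b c d e f : ℂ), Cgen a b c d e f (idx 0 0) (idx 0 1) = 0 := fun _ _ _ _ _ _ => rfl
  have E010 : ∀ (a b c d e f : ℂ), Cgen a b c d e f (idx 0 1) (idx 0 0) = 0 := fun _ _ _ _ _ _ => rfl
  have E011 : ∀ (a b c d e f : ℂ), Cgen a b c d e f (idx 0 1) (idx 0 1) = f := fun _ _ _ _ _ _ => rfl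
  have E100 : ∀ (a b c d e f : ℂ), Cgen a b c d e f (idx 1 0) (idx 1 0) = (d+e) := fun _ _ _ _ _ _ => rfl
  have E101 : ∀ (a b c d e f : ℂ), Cgen a b c d e f (idx 1 0) (idx 1 1) = 0 := fun _ _ _ _ _ _ => rfl
  have E110 : ∀ (a b c d e f : ℂ), Cgen a b c d e f (idx 1 1) (idx 1 0) = 0 := fun _ _ _ _ _ _ => rfl
  have E111 : ∀ (a b c d e f : ℂ), Cgen a b c d e f (idx 1 1) (idx 1 1) = (d+e) := fun _ _ _ _ _ _ => rfl
  have E200 : ∀ (a b c d e f : ℂ), Cgen a b c d e f (idx 2 0) (idx 2 0) = (d+e) := fun _ _ _ _ _ _ => rfl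
  have E201 : ∀ (a b c d e f : ℂ), Cgen a b c d e f (idx 2 0) (idx 2 1) = 0 := fun _ _ _ _ _ _ => rfl
  have E210 : ∀ (a b c d e f : ℂ), Cgen a b c d e f (idx 2 1) (idx 2 0) = 0 := fun _ _ _ _ _ _ => rfl
  have E211 : ∀ (a b c d e f : ℂ), Cgen a b c d e f (idx 2 1) (idx 2 1) = (d+e) := fun _ _ _ _ _ _ => rfl
  have E300 : ∀ (a b c d e f : ℂ), Cgen a b c d e f (idx 3 0) (idx 3 0) = f := fun _ _ _ _ _ _ => rfl
  have E301 : ∀ (a b c d e f : ℂ), Cgen a b c d e f (idx 3 0) (idx 3 1) = 0 := fun _ _ _ _ _ _ => rfl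
  have E310 : ∀ (a b c d e f : ℂ), Cgen a b c d e f (idx 3 1) (idx 3 0) = 0 := fun _ _ _ _ _ _ => rfl
  have E311 : ∀ (a b c d e f : ℂ), Cgen a b c d e f (idx 3 1) (idx 3 1) = a := fun _ _ _ _ _ _ => rfl
  ext k l
  fin_cases k <;> fin_cases l <;>
    simp [ptrace12, Matrix.of_apply, Fin.sum_univ_four, Fin.zero_eta, Fin.mk_one,
      E000, E001, E010, E011, E100, E101, E110, E111,
      E200, E201, E210, E211, E300, E301, E310, E311,
      Matrix.one_apply, h3, h5, h6] <;> ring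

end
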